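/- Let p be a prime and let Φ̃ be a subgroup of GL₂(𝔽_p) whose order is prime to p. Then there exists an injective group homomorphism ι : Φ̃ → GL₂(ℤ_p) such that the composition of ι with the reduction map GL₂(ℤ_p) → GL₂(𝔽_p) (induced by ℤ_p → ℤ_p/pℤ_p = 𝔽_p) equals the inclusion Φ̃ ⊆ GL₂(𝔽_p). -/

import Mathlib

open scoped MatrixGroups

/-- The group homomorphism `GL₂(R) → GL₂(S)` induced by a ring homomorphism `R → S`. -/
def glMap {R S : Type*} [CommRing R] [CommRing S] (f : R →+* S) :
    GL (Fin 2) R →* GL (Fin 2) S :=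
  Units.map (f.mapMatrix).toMonoidHom

namespace Stmt12Aux

lemma one_add_pow {R : Type*} [Ring R] {a : R} (h : a * a = 0) (m : ℕ) :
    (1 + a) ^ m = 1 + m • a := by
  induction m with
  | zero => simp
  | succ n ih =>
    have h2 : (n • a) * a = 0 := by rw [smul_mul_assoc, h, smul_zero]
    rw [pow_succ, ih, succ_nsmul, mul_add, mul_one, add_mul, one_mul, h2, add_zero, add_assoc]

variable {p : ℕ} [Fact p.Prime]

lemma isUnit_of_cast {m : ℕ} (hm : m ≠ 0) {x : ZMod (p ^ m)}
    (h : IsUnit (ZMod.castHom (dvd_pow_self p hm) (ZMod p) x)) : IsUnit x := by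
  haveI : NeZero (p ^ m) := ⟨pow_ne_zero _ (Fact.out (p := p.Prime)).ne_zero⟩
  rw [← ZMod.natCast_zmod_val x] at h ⊢
  rw [map_natCast] at h
  rw [ZMod.isUnit_iff_coprime] at h ⊢
  exact Nat.Coprime.pow_right _ h

lemma glMap_apply {R S : Type*} [CommRing R] [CommRing S] (f : R →+* S) (x : GL (Fin 2) R) :
    (glMap f x).val = (x.val).map f := rfl

lemma glMap_comp_apply {R S T : Type*} [CommRing R] [CommRing S] [CommRing T]
    (g : S →+* T) (f : R →+* S) (x : GL (Fin 2) R) :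
    glMap g (glMap f x) = glMap (g.comp f) x := by
  apply Units.ext
  simp [glMap_apply, Matrix.map_map]

lemma exists_of_cast_eq_zero {a b : ℕ} (hab : a ≤ b) {y : ZMod (p ^ b)}
    (hy : ZMod.castHom (pow_dvd_pow p hab) (ZMod (p ^ a)) y = 0) :
    ∃ c : ℕ, y = ((p ^ a * c : ℕ) : ZMod (p ^ b)) := by
  haveI : NeZero (p ^ b) := ⟨pow_ne_zero _ (Fact.out (p := p.Prime)).ne_zero⟩
  rw [← ZMod.natCast_zmod_val y, map_natCast, ZMod.natCast_eq_zero_iff] at hy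
  obtain ⟨c, hc⟩ := hy
  exact ⟨c, by rw [← hc, ZMod.natCast_zmod_val]⟩

lemma toZMod_eq (z : ℤ_[p]) :
    ZMod.castHom (dvd_pow_self p one_ne_zero) (ZMod p) (PadicInt.toZModPow 1 z)
      = PadicInt.toZMod z := by
  have h1 : PadicInt.toZModPow 1 z = ((PadicInt.appr z 1 : ℕ) : ZMod (p ^ 1)) := rfl
  have h2 : PadicInt.toZMod z = ((PadicInt.zmodRepr z : ℕ) : ZMod p) := rfl
  rw [h1, h2, map_natCast]
  apply PadicInt.zmod_congr_of_sub_mem_max_ideal z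
  · have := PadicInt.appr_spec 1 z
    rwa [pow_one, ← PadicInt.maximalIdeal_eq_span_p] at this
  · exact PadicInt.sub_zmodRepr_mem z


variable (p)

noncomputable def ρ (n : ℕ) : GL (Fin 2) (ZMod (p ^ (n + 1))) →* GL (Fin 2) (ZMod p) :=
  glMap (ZMod.castHom (dvd_pow_self p (Nat.succ_ne_zero n)) (ZMod p))

noncomputable def π (n : ℕ) :
    GL (Fin 2) (ZMod (p ^ (n + 2))) →* GL (Fin 2) (ZMod (p ^ (n + 1))) :=
  glMap (ZMod.castHom (pow_dvd_pow p (Nat.le_succ (n + 1))) (ZMod (p ^ (n + 1))))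

lemma rho_pi (n : ℕ) (x : GL (Fin 2) (ZMod (p ^ (n + 2)))) :
    ρ p n (π p n x) = ρ p (n + 1) x := by
  rw [ρ, π, glMap_comp_apply]
  exact congrArg (fun f => glMap f x) (RingHom.ext_zmod _ _)

lemma pi_surjective (n : ℕ) : Function.Surjective (π p n) := by
  intro B
  set f := ZMod.castHom (pow_dvd_pow p (show n + 1 ≤ n + 2 by omega)) (ZMod (p ^ (n + 1))) with hf
  haveI : NeZero (p ^ (n + 1)) := ⟨pow_ne_zero _ (Fact.out (p := p.Prime)).ne_zero⟩
  set M : Matrix (Fin 2) (Fin 2) (ZMod (p ^ (n + 2))) :=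
    fun i j => (((B.val i j).val : ℕ) : ZMod (p ^ (n + 2))) with hMdef
  have hM : M.map f = B.val := by
    ext i j
    rw [Matrix.map_apply]
    simp only [Matrix.map_apply, hMdef, map_natCast, ZMod.natCast_zmod_val]
  have hdet : IsUnit M.det := by
    apply isUnit_of_cast (m := n + 2) (Nat.succ_ne_zero _)
    have h1 : ZMod.castHom (dvd_pow_self p (Nat.succ_ne_zero (n + 1))) (ZMod p)
        = (ZMod.castHom (dvd_pow_self p (Nat.succ_ne_zero n)) (ZMod p)).comp f :=
      RingHom.ext_zmod _ _
    rw [h1, RingHom.comp_apply, RingHom.map_det, RingHom.mapMatrix_apply, hM]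
    exact ((Matrix.isUnit_iff_isUnit_det _).mp B.isUnit).map _
  obtain ⟨U, hU⟩ := (Matrix.isUnit_iff_isUnit_det M).mpr hdet
  refine ⟨U, Units.ext ?_⟩
  rw [π, glMap_apply, hU, hM]

lemma pi_ker_pow (n : ℕ) (x : GL (Fin 2) (ZMod (p ^ (n + 2)))) (hx : π p n x = 1) :
    x ^ p = 1 := by
  set f := ZMod.castHom (pow_dvd_pow p (show n + 1 ≤ n + 2 by omega)) (ZMod (p ^ (n + 1))) with hf
  set A : Matrix (Fin 2) (Fin 2) (ZMod (p ^ (n + 2))) := x.val - 1 with hA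
  have hent : ∀ i j, ∃ c : ℕ, A i j = ((p ^ (n + 1) * c : ℕ) : ZMod (p ^ (n + 2))) := by
    intro i j
    apply exists_of_cast_eq_zero (show n + 1 ≤ n + 2 by omega)
    have h1 : f.mapMatrix A = 0 := by
      rw [hA, map_sub, map_one]
      have : (f.mapMatrix) x.val = (π p n x).val := rfl
      rw [this, hx]
      simp
    have h2 : (f.mapMatrix A) i j = (0 : Matrix (Fin 2) (Fin 2) (ZMod (p ^ (n + 1)))) i j := by
      rw [h1]
    rwa [RingHom.mapMatrix_apply, Matrix.map_apply, Matrix.zero_apply] at h2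
  have hmul : ∀ i j k : Fin 2, A i k * A k j = 0 := by
    intro i j k
    obtain ⟨c, hc⟩ := hent i k
    obtain ⟨d, hd⟩ := hent k j
    rw [hc, hd, ← Nat.cast_mul, ZMod.natCast_eq_zero_iff]
    calc p ^ (n + 2) ∣ p ^ (n + 1) * p ^ (n + 1) := by
            rw [← pow_add]; exact pow_dvd_pow p (by omega)
      _ ∣ p ^ (n + 1) * c * (p ^ (n + 1) * d) := by
            rw [mul_mul_mul_comm]; exact Dvd.intro (c * d) rfl
  have hA2 : A * A = 0 := by
    ext i j
    rw [Matrix.mul_apply, Matrix.zero_apply]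
    exact Finset.sum_eq_zero fun k _ => hmul i j k
  have hpA : p • A = 0 := by
    ext i j
    obtain ⟨c, hc⟩ := hent i j
    rw [Matrix.smul_apply, Matrix.zero_apply, hc, nsmul_eq_mul, ← Nat.cast_mul,
      ZMod.natCast_eq_zero_iff]
    exact ⟨c, by ring⟩
  have hx1 : x.val = 1 + A := by rw [hA, add_sub_cancel]
  have hxp : x.val ^ p = 1 := by
    rw [hx1, one_add_pow hA2, hpA, add_zero]
  apply Units.ext
  rw [Units.val_pow_eq_pow_val, hxp, Units.val_one]

lemma step (Φt : Subgroup (GL (Fin 2) (ZMod p))) (hΦ : ¬ p ∣ Nat.card Φt) (n : ℕ)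
    (ι : Φt →* GL (Fin 2) (ZMod (p ^ (n + 1))))
    (hι : ∀ g, ρ p n (ι g) = (g : GL (Fin 2) (ZMod p))) :
    ∃ ι' : Φt →* GL (Fin 2) (ZMod (p ^ (n + 2))), ∀ g, π p n (ι' g) = ι g := by
  haveI : NeZero (p ^ (n + 2)) := ⟨pow_ne_zero _ (Fact.out (p := p.Prime)).ne_zero⟩
  have hinj : Function.Injective ι := by
    intro a b hab
    exact Subtype.ext ((hι a).symm.trans (by rw [hab, hι b]))
  set G' : Subgroup (GL (Fin 2) (ZMod (p ^ (n + 2)))) := Subgroup.comap (π p n) ι.range with hG'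
  set φ : G' →* GL (Fin 2) (ZMod (p ^ (n + 1))) := (π p n).comp G'.subtype with hφ
  have hφrange : φ.range = ι.range := by
    apply le_antisymm
    · rintro y ⟨x, rfl⟩
      exact x.2
    · rintro y hy
      obtain ⟨x, hx⟩ := pi_surjective p n y
      exact ⟨⟨x, Subgroup.mem_comap.mpr (by rw [hx]; exact hy)⟩, hx⟩
  have hNp : IsPGroup p φ.ker := by
    intro g
    refine ⟨1, ?_⟩
    have h1 : ((g : G') : GL (Fin 2) (ZMod (p ^ (n + 2)))) ^ p = 1 := by
      apply pi_ker_pow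
      exact g.2
    rw [pow_one]
    refine Subtype.ext (Subtype.ext ?_)
    push_cast
    exact h1
  have hidx : φ.ker.index = Nat.card Φt := by
    rw [Subgroup.index_ker, hφrange]
    exact (Nat.card_congr (MonoidHom.ofInjective hinj).toEquiv).symm
  have hcop : Nat.Coprime (Nat.card φ.ker) φ.ker.index := by
    obtain ⟨k, hk⟩ := hNp.exists_card_eq
    rw [hk, hidx]
    exact Nat.Coprime.pow_left _
      ((Nat.Prime.coprime_iff_not_dvd (Fact.out (p := p.Prime))).mpr hΦ)
  obtain ⟨H, hH⟩ := Subgroup.exists_right_complement'_of_coprime hcop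
  set χ : H →* GL (Fin 2) (ZMod (p ^ (n + 1))) := φ.comp H.subtype with hχ
  have hχinj : Function.Injective χ := by
    intro a b hab
    have hy1 : (↑a * (↑b)⁻¹ : G') ∈ φ.ker := by
      rw [MonoidHom.mem_ker, map_mul, map_inv]
      rw [show φ ↑a = χ a from rfl, show φ ↑b = χ b from rfl, hab, mul_inv_cancel]
    have hyH : (↑a * (↑b)⁻¹ : G') ∈ H := mul_mem a.2 (inv_mem b.2)
    have h2 : (↑a * (↑b)⁻¹ : G') = 1 := by
      have := hH.disjoint.le_bot (Subgroup.mem_inf.mpr ⟨hy1, hyH⟩)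
      simpa using this
    exact Subtype.ext (by rwa [mul_inv_eq_one] at h2)
  have hχr : ∀ y : ι.range, ∃ h : H, χ h = y := by
    intro y
    have hy : (y : GL (Fin 2) (ZMod (p ^ (n + 1)))) ∈ φ.range := by
      rw [hφrange]; exact y.2
    obtain ⟨x, hx⟩ := hy
    obtain ⟨⟨n₀, h₀⟩, hnh⟩ := hH.2 x
    refine ⟨⟨h₀.1, h₀.2⟩, ?_⟩
    have hn0 : φ n₀.1 = 1 := n₀.2
    have : φ x = y := hx
    rw [← this, ← hnh, map_mul, hn0, one_mul]
    rfl
  have hmem : ∀ h : H, χ h ∈ ι.range := by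
    intro h
    rw [← hφrange]
    exact ⟨↑h, rfl⟩
  set χ' : H →* ι.range := χ.codRestrict ι.range hmem with hχ'
  have hbij : Function.Bijective χ' := by
    constructor
    · intro a b hab
      exact hχinj (congrArg Subtype.val hab)
    · intro y
      obtain ⟨h, hh⟩ := hχr y
      exact ⟨h, Subtype.ext hh⟩
  set e := MulEquiv.ofBijective χ' hbij with he
  refine ⟨((G'.subtype.comp H.subtype).comp e.symm.toMonoidHom).comp ι.rangeRestrict, ?_⟩
  intro g
  show π p n (↑↑(e.symm (ι.rangeRestrict g))) = ι g
  calc π p n (↑↑(e.symm (ι.rangeRestrict g))) = χ (e.symm (ι.rangeRestrict g)) := rfl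
    _ = ↑(χ' (e.symm (ι.rangeRestrict g))) := rfl
    _ = ↑(e (e.symm (ι.rangeRestrict g))) := rfl
    _ = ↑(ι.rangeRestrict g) := by rw [e.apply_symm_apply]
    _ = ι g := rfl

noncomputable def iota0 (Φt : Subgroup (GL (Fin 2) (ZMod p))) :
    Φt →* GL (Fin 2) (ZMod (p ^ 1)) :=
  (glMap (ZMod.castHom (show p ^ 1 ∣ p by rw [pow_one]) (ZMod (p ^ 1)))).comp Φt.subtype

lemma iota0_spec (Φt : Subgroup (GL (Fin 2) (ZMod p))) (g : Φt) :
    ρ p 0 (iota0 p Φt g) = (g : GL (Fin 2) (ZMod p)) := by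
  show ρ p 0 (glMap _ (↑g : GL (Fin 2) (ZMod p))) = ↑g
  rw [ρ, glMap_comp_apply]
  calc glMap ((ZMod.castHom (dvd_pow_self p (Nat.succ_ne_zero 0)) (ZMod p)).comp
        (ZMod.castHom (show p ^ 1 ∣ p by rw [pow_one]) (ZMod (p ^ 1)))) (↑g) 
      = glMap (RingHom.id (ZMod p)) ↑g := congrArg (fun f => glMap f _) (RingHom.ext_zmod _ _)
    _ = ↑g := Units.ext (by ext i j; simp [glMap_apply, Matrix.map_apply])

def LiftData (Φt : Subgroup (GL (Fin 2) (ZMod p))) (n : ℕ) :=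
  {ι : Φt →* GL (Fin 2) (ZMod (p ^ (n + 1))) // ∀ g, ρ p n (ι g) = (g : GL (Fin 2) (ZMod p))}

noncomputable def seqStep (Φt : Subgroup (GL (Fin 2) (ZMod p))) (hΦ : ¬ p ∣ Nat.card Φt)
    (n : ℕ) (prev : LiftData p Φt n) : LiftData p Φt (n + 1) :=
  ⟨Classical.choose (step p Φt hΦ n prev.1 prev.2), fun g => by
    have hc := Classical.choose_spec (step p Φt hΦ n prev.1 prev.2) g
    rw [← rho_pi p n, hc]
    exact prev.2 g⟩

noncomputable def seq (Φt : Subgroup (GL (Fin 2) (ZMod p))) (hΦ : ¬ p ∣ Nat.card Φt) :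
    ∀ n : ℕ, LiftData p Φt n :=
  fun n => Nat.rec ⟨iota0 p Φt, iota0_spec p Φt⟩ (seqStep p Φt hΦ) n

lemma seq_compat (Φt : Subgroup (GL (Fin 2) (ZMod p))) (hΦ : ¬ p ∣ Nat.card Φt) (n : ℕ)
    (g : Φt) :
    π p n ((seq p Φt hΦ (n + 1)).1 g) = (seq p Φt hΦ n).1 g :=
  Classical.choose_spec (step p Φt hΦ n (seq p Φt hΦ n).1 (seq p Φt hΦ n).2) g

def compatRing : Subring (Π k : ℕ, ZMod (p ^ k)) where
  carrier := {x | ∀ k : ℕ,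
    ZMod.castHom (pow_dvd_pow p (Nat.le_succ k)) (ZMod (p ^ k)) (x (k + 1)) = x k}
  zero_mem' := by intro k; simp
  one_mem' := by
    intro k
    show ZMod.castHom _ _ ((1 : Π k : ℕ, ZMod (p ^ k)) (k + 1)) = (1 : Π k : ℕ, ZMod (p ^ k)) k
    rw [Pi.one_apply, Pi.one_apply, map_one]
  add_mem' := by
    intro a b ha hb k
    show ZMod.castHom _ _ ((a + b) (k + 1)) = (a + b) k
    rw [Pi.add_apply, Pi.add_apply, map_add, ha k, hb k]
  mul_mem' := by
    intro a b ha hb k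
    show ZMod.castHom _ _ ((a * b) (k + 1)) = (a * b) k
    rw [Pi.mul_apply, Pi.mul_apply, map_mul, ha k, hb k]
  neg_mem' := by
    intro a ha k
    show ZMod.castHom _ _ ((-a) (k + 1)) = (-a) k
    rw [Pi.neg_apply, Pi.neg_apply, map_neg, ha k]

def projHom (k : ℕ) : compatRing p →+* ZMod (p ^ k) :=
  (Pi.evalRingHom (fun k : ℕ => ZMod (p ^ k)) k).comp (Subring.subtype (compatRing p))

lemma proj_compat : ∀ (k1 k2 : ℕ) (hk : k1 ≤ k2),
    (ZMod.castHom (pow_dvd_pow p hk) (ZMod (p ^ k1))).comp (projHom p k2) = projHom p k1 := by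
  intro k1 k2 hk
  induction k2, hk using Nat.le_induction with
  | base =>
    have h1 : ZMod.castHom (pow_dvd_pow p (le_refl k1)) (ZMod (p ^ k1)) = RingHom.id _ :=
      RingHom.ext_zmod _ _
    rw [h1, RingHom.id_comp]
  | succ m hm ih =>
    apply RingHom.ext
    intro x
    have h1 : ZMod.castHom (pow_dvd_pow p (hm.trans (Nat.le_succ m))) (ZMod (p ^ k1))
        = (ZMod.castHom (pow_dvd_pow p hm) (ZMod (p ^ k1))).comp
          (ZMod.castHom (pow_dvd_pow p (Nat.le_succ m)) (ZMod (p ^ m))) :=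
      RingHom.ext_zmod _ _
    show ZMod.castHom (pow_dvd_pow p (hm.trans (Nat.le_succ m))) (ZMod (p ^ k1)) (x.1 (m + 1)) = x.1 k1
    rw [h1, RingHom.comp_apply]
    have h2 : ZMod.castHom (pow_dvd_pow p (Nat.le_succ m)) (ZMod (p ^ m)) (x.1 (m + 1))
        = x.1 m := x.2 m
    rw [h2]
    exact RingHom.congr_fun ih x

noncomputable def lim : compatRing p →+* ℤ_[p] := PadicInt.lift (proj_compat p)

lemma lim_spec (k : ℕ) (x : compatRing p) : PadicInt.toZModPow k (lim p x) = x.1 k :=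
  RingHom.congr_fun (PadicInt.lift_spec (proj_compat p) k) x

lemma seq_entry_compat (Φt : Subgroup (GL (Fin 2) (ZMod p))) (hΦ : ¬ p ∣ Nat.card Φt)
    (n : ℕ) (g : Φt) (i j : Fin 2) :
    ZMod.castHom (pow_dvd_pow p (Nat.le_succ (n + 1))) (ZMod (p ^ (n + 1)))
        (((seq p Φt hΦ (n + 1)).1 g).val i j)
      = ((seq p Φt hΦ n).1 g).val i j := by
  have h2 := congrArg Units.val (seq_compat p Φt hΦ n g)
  calc ZMod.castHom (pow_dvd_pow p (Nat.le_succ (n + 1))) (ZMod (p ^ (n + 1)))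
        (((seq p Φt hΦ (n + 1)).1 g).val i j)
      = ((π p n) ((seq p Φt hΦ (n + 1)).1 g)).val i j := rfl
    _ = ((seq p Φt hΦ n).1 g).val i j := by rw [h2]

noncomputable def entSeq (Φt : Subgroup (GL (Fin 2) (ZMod p))) (hΦ : ¬ p ∣ Nat.card Φt)
    (g : Φt) (i j : Fin 2) : compatRing p :=
  ⟨fun k => match k with
    | 0 => 0
    | (m + 1) => ((seq p Φt hΦ m).1 g).val i j,
   by
    intro k
    match k with
    | 0 =>
      haveI : Subsingleton (ZMod (p ^ 0)) := by rw [pow_zero]; infer_instance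
      exact Subsingleton.elim _ _
    | (m + 1) => exact seq_entry_compat p Φt hΦ m g i j⟩

noncomputable def Mat (Φt : Subgroup (GL (Fin 2) (ZMod p))) (hΦ : ¬ p ∣ Nat.card Φt)
    (g : Φt) : Matrix (Fin 2) (Fin 2) ℤ_[p] :=
  fun i j => lim p (entSeq p Φt hΦ g i j)

lemma Mat_map (Φt : Subgroup (GL (Fin 2) (ZMod p))) (hΦ : ¬ p ∣ Nat.card Φt)
    (g : Φt) (m : ℕ) :
    (Mat p Φt hΦ g).map (PadicInt.toZModPow (m + 1)) = ((seq p Φt hΦ m).1 g).val := by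
  ext i j
  rw [Matrix.map_apply]
  exact lim_spec p (m + 1) (entSeq p Φt hΦ g i j)

lemma mat_ext {z w : Matrix (Fin 2) (Fin 2) ℤ_[p]}
    (h : ∀ m : ℕ, z.map (PadicInt.toZModPow (m + 1)) = w.map (PadicInt.toZModPow (m + 1))) :
    z = w := by
  ext i j
  rw [← PadicInt.ext_of_toZModPow]
  intro n
  match n with
  | 0 =>
    haveI : Subsingleton (ZMod (p ^ 0)) := by rw [pow_zero]; infer_instance
    exact Subsingleton.elim _ _
  | (m + 1) =>
    have := congrFun (congrFun (h m) i) j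
    simpa [Matrix.map_apply] using this

lemma Mat_mul (Φt : Subgroup (GL (Fin 2) (ZMod p))) (hΦ : ¬ p ∣ Nat.card Φt) (g h : Φt) :
    Mat p Φt hΦ (g * h) = Mat p Φt hΦ g * Mat p Φt hΦ h :=
  by
    apply mat_ext
    intro m
    rw [Matrix.map_mul, Mat_map, Mat_map, Mat_map, map_mul, Units.val_mul]

lemma Mat_one (Φt : Subgroup (GL (Fin 2) (ZMod p))) (hΦ : ¬ p ∣ Nat.card Φt) :
    Mat p Φt hΦ 1 = 1 :=
  by
    apply mat_ext
    intro m
    rw [Mat_map, map_one, Units.val_one, Matrix.map_one _ (map_zero _) (map_one _)]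

end Stmt12Aux

theorem stmt12 (p : ℕ) [Fact p.Prime]
    (Φt : Subgroup (GL (Fin 2) (ZMod p))) (hΦ : ¬ p ∣ Nat.card Φt) :
    ∃ ι : Φt →* GL (Fin 2) ℤ_[p],
      Function.Injective ι ∧
      ∀ h : Φt, glMap (PadicInt.toZMod) (ι h) = (h : GL (Fin 2) (ZMod p)) := by
  classical
  have hinv1 : ∀ g : Φt, Stmt12Aux.Mat p Φt hΦ g * Stmt12Aux.Mat p Φt hΦ g⁻¹ = 1 := by
    intro g
    rw [← Stmt12Aux.Mat_mul, mul_inv_cancel, Stmt12Aux.Mat_one]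
  have hinv2 : ∀ g : Φt, Stmt12Aux.Mat p Φt hΦ g⁻¹ * Stmt12Aux.Mat p Φt hΦ g = 1 := by
    intro g
    rw [← Stmt12Aux.Mat_mul, inv_mul_cancel, Stmt12Aux.Mat_one]
  let ι : Φt →* GL (Fin 2) ℤ_[p] := MonoidHom.mk'
    (fun g => ⟨Stmt12Aux.Mat p Φt hΦ g, Stmt12Aux.Mat p Φt hΦ g⁻¹, hinv1 g, hinv2 g⟩)
    (fun g h => Units.ext (by
      show Stmt12Aux.Mat p Φt hΦ (g * h)
          = Stmt12Aux.Mat p Φt hΦ g * Stmt12Aux.Mat p Φt hΦ h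
      exact Stmt12Aux.Mat_mul p Φt hΦ g h))
  have hcomp : ∀ h : Φt, glMap (PadicInt.toZMod) (ι h) = (h : GL (Fin 2) (ZMod p)) := by
    intro h
    apply Units.ext
    rw [Stmt12Aux.glMap_apply]
    show (Stmt12Aux.Mat p Φt hΦ h).map PadicInt.toZMod = ((h : GL (Fin 2) (ZMod p)) : _)
    ext i j
    rw [Matrix.map_apply, ← Stmt12Aux.toZMod_eq]
    rw [show PadicInt.toZModPow 1 (Stmt12Aux.Mat p Φt hΦ h i j)
        = ((Stmt12Aux.seq p Φt hΦ 0).1 h).val i j from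
      Stmt12Aux.lim_spec p 1 (Stmt12Aux.entSeq p Φt hΦ h i j)]
    have h2 := congrArg Units.val ((Stmt12Aux.seq p Φt hΦ 0).2 h)
    calc ZMod.castHom (dvd_pow_self p one_ne_zero) (ZMod p)
          (((Stmt12Aux.seq p Φt hΦ 0).1 h).val i j)
        = ((Stmt12Aux.ρ p 0) ((Stmt12Aux.seq p Φt hΦ 0).1 h)).val i j := rfl
      _ = ((h : GL (Fin 2) (ZMod p)) : Matrix (Fin 2) (Fin 2) (ZMod p)) i j := by rw [h2]
  refine ⟨ι, ?_, hcomp⟩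
  intro a b hab
  apply Subtype.ext
  have := hcomp a
  rw [hab, hcomp b] at this
  exact this.symm
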